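/- arXiv:1412.7429 — 7 statements merged into one kernel-verified Lean document; each statement's English description precedes it below -/
import Mathlib

section
/- Let E0, A, μ0, g1, g2 be real numbers with A ≠ 0 and (g1 − g2)² ≤ 4A², and let φ = arcsin((g1 − g2)/(2A)) ∈ ℝ. Then the eigenvectors u₊ = (e^{−iφ/2}, e^{iφ/2}) and u₋ = (−e^{iφ/2}, e^{−iφ/2}) of L satisfy ⟨u₊, u₋⟩ = i(g2 − g1)/A. In particular, u₊ and u₋ are orthogonal if and only if g1 = g2. -/
open Complex Matrix

/-- For `φ = arcsin((g₁-g₂)/(2A))` the eigenvectors `u₊`, `u₋` of `L` satisfy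
`⟨u₊, u₋⟩ = i (g₂ - g₁)/A`; in particular they are orthogonal iff `g₁ = g₂`. -/
theorem stmt_1 (E0 A μ0 g1 g2 : ℝ) (hA : A ≠ 0) (h : (g1 - g2) ^ 2 ≤ 4 * A ^ 2) :
    let φ : ℝ := Real.arcsin ((g1 - g2) / (2 * A))
    let uP : Fin 2 → ℂ := ![Complex.exp (-Complex.I * (φ : ℂ) / 2),
      Complex.exp (Complex.I * (φ : ℂ) / 2)]
    let uM : Fin 2 → ℂ := ![-Complex.exp (Complex.I * (φ : ℂ) / 2),
      Complex.exp (-Complex.I * (φ : ℂ) / 2)]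
    (starRingEnd ℂ) (uP 0) * uM 0 + (starRingEnd ℂ) (uP 1) * uM 1
      = Complex.I * ((g2 : ℂ) - g1) / A ∧
    ((starRingEnd ℂ) (uP 0) * uM 0 + (starRingEnd ℂ) (uP 1) * uM 1 = 0 ↔ g1 = g2) := by
  intro φ uP uM
  have habs : |(g1 - g2) / (2 * A)| ≤ 1 := by
    rw [abs_div, div_le_one (by positivity)]
    have h1 : |g1 - g2| ^ 2 ≤ |2 * A| ^ 2 := by
      rw [_root_.sq_abs, _root_.sq_abs]; nlinarith
    nlinarith [abs_nonneg (g1 - g2), abs_nonneg (2 * A)]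
  have hx1 : -1 ≤ (g1 - g2) / (2 * A) := neg_le_of_abs_le habs
  have hx2 : (g1 - g2) / (2 * A) ≤ 1 := le_of_abs_le habs
  have hs : Complex.sin (φ : ℂ) = (((g1 - g2) / (2 * A) : ℝ) : ℂ) := by
    rw [← Complex.ofReal_sin]
    norm_cast
    exact Real.sin_arcsin hx1 hx2
  have hconj1 : (starRingEnd ℂ) (Complex.exp (-Complex.I * (φ : ℂ) / 2))
      = Complex.exp (Complex.I * (φ : ℂ) / 2) := by
    rw [← Complex.exp_conj]; congr 1
    simp [Complex.conj_ofReal, map_ofNat]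
  have hconj2 : (starRingEnd ℂ) (Complex.exp (Complex.I * (φ : ℂ) / 2))
      = Complex.exp (-Complex.I * (φ : ℂ) / 2) := by
    rw [← Complex.exp_conj]; congr 1
    simp [Complex.conj_ofReal, map_ofNat]
  have e1 : Complex.exp (Complex.I * (φ : ℂ)) = Complex.cos φ + Complex.sin φ * Complex.I := by
    rw [mul_comm]; exact Complex.exp_mul_I φ
  have e2 : Complex.exp (-Complex.I * (φ : ℂ)) = Complex.cos φ - Complex.sin φ * Complex.I := by
    have := Complex.exp_mul_I (-(φ : ℂ))
    rw [Complex.cos_neg, Complex.sin_neg] at this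
    rw [show -Complex.I * (φ : ℂ) = -(φ : ℂ) * Complex.I by ring, this]; ring
  have key : (starRingEnd ℂ) (uP 0) * uM 0 + (starRingEnd ℂ) (uP 1) * uM 1
      = Complex.I * ((g2 : ℂ) - g1) / A := by
    show (starRingEnd ℂ) (Complex.exp (-Complex.I * (φ : ℂ) / 2)) *
        (-Complex.exp (Complex.I * (φ : ℂ) / 2)) +
        (starRingEnd ℂ) (Complex.exp (Complex.I * (φ : ℂ) / 2)) *
        Complex.exp (-Complex.I * (φ : ℂ) / 2) = _
    rw [hconj1, hconj2, mul_neg, ← Complex.exp_add, ← Complex.exp_add]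
    have r1 : Complex.I * (φ : ℂ) / 2 + Complex.I * (φ : ℂ) / 2 = Complex.I * (φ : ℂ) := by ring
    have r2 : -Complex.I * (φ : ℂ) / 2 + -Complex.I * (φ : ℂ) / 2 = -Complex.I * (φ : ℂ) := by
      ring
    rw [r1, r2]
    rw [e1, e2, hs]
    have hA' : (A : ℂ) ≠ 0 := Complex.ofReal_ne_zero.mpr hA
    push_cast
    field_simp
    ring
  refine ⟨key, ?_⟩
  rw [key]
  have hA' : (A : ℂ) ≠ 0 := Complex.ofReal_ne_zero.mpr hA
  rw [div_eq_zero_iff, mul_eq_zero]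
  simp [Complex.I_ne_zero, hA', sub_eq_zero, eq_comm]
end

section
/- Let E0, A, μ0, g1, g2, a be real numbers and let u : ℝ → ℂ² be differentiable and satisfy i·u'(t) = H u(t) + i(μ0·I + G) u(t) + a·diag(|u₁(t)|², |u₂(t)|²)·u(t) for all t. Then the squared norm N(t) = |u₁(t)|² + |u₂(t)|² satisfies the differential inequality N'(t) ≤ 2(μ0 − min(g1, g2))·N(t) for all t. -/
open Complex Matrix

/-- For solutions of the nonlinear two-level system, the squared norm
`N(t) = |u₁(t)|² + |u₂(t)|²` satisfies `N'(t) ≤ 2(μ₀ - min(g₁,g₂)) N(t)`. -/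
theorem stmt_4 (E0 A μ0 g1 g2 a : ℝ)
    (H : Matrix (Fin 2) (Fin 2) ℂ) (hH : H = !![(E0 : ℂ), (A : ℂ); (A : ℂ), (E0 : ℂ)])
    (G : Matrix (Fin 2) (Fin 2) ℂ) (hG : G = !![(-g1 : ℂ), 0; 0, (-g2 : ℂ)])
    (u u' : ℝ → Fin 2 → ℂ)
    (hderiv : ∀ t, HasDerivAt u (u' t) t)
    (heq : ∀ t, Complex.I • u' t =
      H.mulVec (u t)
      + Complex.I • (((μ0 : ℂ) • (1 : Matrix (Fin 2) (Fin 2) ℂ) + G).mulVec (u t))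
      + (a : ℂ) • (Matrix.diagonal ![((‖u t 0‖ : ℂ))^2, ((‖u t 1‖ : ℂ))^2]).mulVec (u t)) :
    ∀ t, deriv (fun s => ‖u s 0‖ ^ 2 + ‖u s 1‖ ^ 2) t
      ≤ 2 * (μ0 - min g1 g2) * (‖u t 0‖ ^ 2 + ‖u t 1‖ ^ 2) := by
  intro t
  have h0 : HasDerivAt (fun s => u s 0) (u' t 0) t := (hasDerivAt_pi.mp (hderiv t)) 0
  have h1 : HasDerivAt (fun s => u s 1) (u' t 1) t := (hasDerivAt_pi.mp (hderiv t)) 1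
  -- derivative of each squared norm
  have hn : ∀ (f : ℝ → ℂ) (f' : ℂ), HasDerivAt f f' t →
      HasDerivAt (fun s => ‖f s‖^2) ((f' * star (f t) + f t * star f').re) t := by
    intro f f' h
    have hmul := h.mul h.star
    have h2 : HasDerivAt (fun s => (f s * star (f s)).re)
        ((f' * star (f t) + f t * star f').re) t :=
      Complex.reCLM.hasFDerivAt.comp_hasDerivAt t hmul
    convert h2 using 2 with s
    rw [show star (f s) = starRingEnd ℂ (f s) from rfl, Complex.mul_conj]
    simp [Complex.normSq_eq_norm_sq, ← Complex.ofReal_pow]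
  have hn0 := hn _ _ h0
  have hn1 := hn _ _ h1
  have hN : HasDerivAt (fun s => ‖u s 0‖ ^ 2 + ‖u s 1‖ ^ 2)
      ((u' t 0 * star (u t 0) + u t 0 * star (u' t 0)).re
        + (u' t 1 * star (u t 1) + u t 1 * star (u' t 1)).re) t := hn0.add hn1
  rw [hN.deriv]
  -- component equations
  have e0 := congrFun (heq t) 0
  have e1 := congrFun (heq t) 1
  simp only [hH, hG] at e0 e1
  simp [Matrix.mulVec, dotProduct, Fin.sum_univ_two, Matrix.diagonal,
    Matrix.one_apply, Matrix.add_apply, Matrix.smul_apply, Matrix.add_mulVec,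
    Matrix.smul_mulVec, Matrix.one_mulVec, Matrix.vecHead, Matrix.vecTail,
    Pi.smul_apply, smul_eq_mul, Function.comp] at e0 e1
  have e0' : u' t 0 = -Complex.I * (↑E0 * u t 0 + ↑A * u t 1
      + Complex.I * (↑μ0 * u t 0 + -(↑g1 * u t 0))
      + ↑a * (↑‖u t 0‖ ^ 2 * u t 0)) := by
    linear_combination (-Complex.I) * e0 + u' t 0 * Complex.I_sq
  have e1' : u' t 1 = -Complex.I * (↑A * u t 0 + ↑E0 * u t 1
      + Complex.I * (↑μ0 * u t 1 + -(↑g2 * u t 1))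
      + ↑a * (↑‖u t 1‖ ^ 2 * u t 1)) := by
    linear_combination (-Complex.I) * e1 + u' t 1 * Complex.I_sq
  have hsq0 : ‖u t 0‖ ^ 2 = (u t 0).re^2 + (u t 0).im^2 := by
    rw [Complex.sq_norm, Complex.normSq_apply]; ring
  have hsq1 : ‖u t 1‖ ^ 2 = (u t 1).re^2 + (u t 1).im^2 := by
    rw [Complex.sq_norm, Complex.normSq_apply]; ring
  have key : (u' t 0 * star (u t 0) + u t 0 * star (u' t 0)).re
      + (u' t 1 * star (u t 1) + u t 1 * star (u' t 1)).re
      = 2*(μ0-g1)*‖u t 0‖^2 + 2*(μ0-g2)*‖u t 1‖^2 := by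
    rw [e0', e1']
    simp only [← Complex.ofReal_pow]
    simp only [Complex.mul_re, Complex.mul_im, Complex.add_re, Complex.add_im,
      Complex.neg_re, Complex.neg_im, Complex.I_re, Complex.I_im, Complex.ofReal_re,
      Complex.ofReal_im, RingHom.coe_coe, Complex.conj_re, Complex.conj_im,
      show ∀ z : ℂ, star z = starRingEnd ℂ z from fun _ => rfl]
    linear_combination (-2)*(μ0-g1)*hsq0 + (-2)*(μ0-g2)*hsq1
  rw [key]
  have hm1 : min g1 g2 ≤ g1 := min_le_left _ _
  have hm2 : min g1 g2 ≤ g2 := min_le_right _ _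
  nlinarith [sq_nonneg ‖u t 0‖, sq_nonneg ‖u t 1‖]
end

section
/- Let E0, A, μ0, g1, g2, a be real numbers with A > 0, a > 0, g2 < μ0 < g1, and set X = √((g1 − μ0)(μ0 − g2))/A; assume X² < 1. Define r = √((μ0 − g2)/(g1 − g2)), x = √((g1 − μ0)/(g1 − g2)), φ = −arcsin(X), R² = ((g1 − g2)/a)·√(1/X² − 1), Ω = E0 + a·R², and u₀ = (r·e^{iφ}, x) ∈ ℂ². Then ‖u₀‖² = r² + x² = 1, Ω is real, and u₀ solves the nonlinear eigenvalue problem Ω·u₀ = L u₀ + a·R²·diag(|u₀₁|², |u₀₂|²)·u₀. -/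
open Complex Matrix

/-- Exact self-consistent oscillatory state of the nonlinear two-level system:
with `g₂ < μ₀ < g₁`, `X² < 1`, the vector `u₀ = (r e^{iφ}, x)` with the indicated
parameters has unit norm and solves the nonlinear eigenvalue problem with the real
eigenvalue `Ω = E₀ + a R²`. -/
theorem stmt_5 (E0 A μ0 g1 g2 a : ℝ) (hA : 0 < A) (ha : 0 < a)
    (h1 : g2 < μ0) (h2 : μ0 < g1)
    (X : ℝ) (hX : X = Real.sqrt ((g1 - μ0) * (μ0 - g2)) / A) (hX2 : X ^ 2 < 1) :
    let r : ℝ := Real.sqrt ((μ0 - g2) / (g1 - g2))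
    let x : ℝ := Real.sqrt ((g1 - μ0) / (g1 - g2))
    let φ : ℝ := -Real.arcsin X
    let R2 : ℝ := ((g1 - g2) / a) * Real.sqrt (1 / X ^ 2 - 1)
    let Ω : ℝ := E0 + a * R2
    let u0 : Fin 2 → ℂ := ![(r : ℂ) * Complex.exp (Complex.I * (φ : ℂ)), (x : ℂ)]
    let H : Matrix (Fin 2) (Fin 2) ℂ := !![(E0 : ℂ), (A : ℂ); (A : ℂ), (E0 : ℂ)]
    let G : Matrix (Fin 2) (Fin 2) ℂ := !![(-g1 : ℂ), 0; 0, (-g2 : ℂ)]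
    let L : Matrix (Fin 2) (Fin 2) ℂ :=
      H + Complex.I • ((μ0 : ℂ) • (1 : Matrix (Fin 2) (Fin 2) ℂ) + G)
    r ^ 2 + x ^ 2 = 1 ∧ ‖u0 0‖ ^ 2 + ‖u0 1‖ ^ 2 = 1 ∧
      (Ω : ℂ) • u0 = L.mulVec u0
        + ((a : ℂ) * (R2 : ℂ)) •
          (Matrix.diagonal ![((‖u0 0‖ : ℂ))^2, ((‖u0 1‖ : ℂ))^2]).mulVec u0 := by
  intro r x φ R2 Ω u0 H G L
  have hD : (0:ℝ) < g1 - g2 := by linarith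
  have h1' : (0:ℝ) < μ0 - g2 := by linarith
  have h2' : (0:ℝ) < g1 - μ0 := by linarith
  have hXpos : 0 < X := by rw [hX]; positivity
  have hXne : X ≠ 0 := ne_of_gt hXpos
  have hX1 : X < 1 := by nlinarith
  have hr0 : 0 ≤ r := Real.sqrt_nonneg _
  have hx0 : 0 ≤ x := Real.sqrt_nonneg _
  have hr2 : r ^ 2 = (μ0 - g2) / (g1 - g2) := Real.sq_sqrt (by positivity)
  have hx2 : x ^ 2 = (g1 - μ0) / (g1 - g2) := Real.sq_sqrt (by positivity)
  have hDr2 : (g1 - g2) * r ^ 2 = μ0 - g2 := by rw [hr2]; field_simp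
  have hDx2 : (g1 - g2) * x ^ 2 = g1 - μ0 := by rw [hx2]; field_simp
  have hrx : r ^ 2 + x ^ 2 = 1 := by rw [hr2, hx2]; field_simp; ring
  set S := Real.sqrt (1 - X ^ 2) with hSdef
  have hS0 : 0 ≤ S := Real.sqrt_nonneg _
  have hS2 : S ^ 2 = 1 - X ^ 2 := Real.sq_sqrt (by nlinarith)
  have hAX2 : (A * X) ^ 2 = (g1 - μ0) * (μ0 - g2) := by
    have : A * X = Real.sqrt ((g1 - μ0) * (μ0 - g2)) := by
      rw [hX]; field_simp
    rw [this]; exact Real.sq_sqrt (by positivity)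
  have sqeq : ∀ u v : ℝ, 0 ≤ u → 0 ≤ v → u ^ 2 = v ^ 2 → u = v := by
    intro u v hu hv h
    rw [← Real.sqrt_sq hu, h, Real.sqrt_sq hv]
  -- key product relations
  have hAxX : A * x * X = (g1 - μ0) * r := by
    apply sqeq _ _ (by positivity) (by positivity)
    apply mul_left_cancel₀ (ne_of_gt hD)
    linear_combination (A*X)^2 * hDx2 + (g1-μ0) * hAX2 - (g1-μ0)^2 * hDr2
  have hArX : A * r * X = (μ0 - g2) * x := by
    apply sqeq _ _ (by positivity) (by positivity)
    apply mul_left_cancel₀ (ne_of_gt hD)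
    linear_combination (A*X)^2 * hDr2 + (μ0-g2) * hAX2 - (μ0-g2)^2 * hDx2
  have hk : (a * R2) * X = (g1 - g2) * S := by
    have h5 : 1 / X ^ 2 - 1 = (S / X) ^ 2 := by
      rw [div_pow, hS2]; field_simp
    have h6 : Real.sqrt (1 / X ^ 2 - 1) = S / X := by
      rw [h5, Real.sqrt_sq (by positivity)]
    show (a * (((g1 - g2) / a) * Real.sqrt (1 / X ^ 2 - 1))) * X = _
    rw [h6]; field_simp
  -- complex exponential
  have he : Complex.exp (Complex.I * (φ : ℂ)) = (S : ℂ) - Complex.I * X := by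
    have hc : Real.cos φ = S := by
      show Real.cos (-Real.arcsin X) = S
      rw [Real.cos_neg, Real.cos_arcsin]
    have hs : Real.sin φ = -X := by
      show Real.sin (-Real.arcsin X) = -X
      rw [Real.sin_neg, Real.sin_arcsin (by linarith) (by linarith)]
    rw [mul_comm, Complex.exp_mul_I, ← Complex.ofReal_cos, ← Complex.ofReal_sin, hc, hs]
    push_cast; ring
  have hn0 : ‖u0 0‖ = r := by
    show ‖(r : ℂ) * Complex.exp (Complex.I * (φ : ℂ))‖ = r
    have h7 : ‖Complex.exp (Complex.I * (φ : ℂ))‖ = 1 := by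
      simp [Complex.norm_exp, Complex.mul_re]
    rw [norm_mul, h7, mul_one, Complex.norm_real, Real.norm_eq_abs, _root_.abs_of_nonneg hr0]
  have hn1 : ‖u0 1‖ = x := by
    show ‖(x : ℂ)‖ = x
    rw [Complex.norm_real, Real.norm_eq_abs, _root_.abs_of_nonneg hx0]
  refine ⟨hrx, by rw [hn0, hn1]; exact hrx, ?_⟩
  -- complex casts
  have hXneC : (X : ℂ) ≠ 0 := by exact_mod_cast hXne
  have hS2C : (S : ℂ) ^ 2 = 1 - (X : ℂ) ^ 2 := by exact_mod_cast hS2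
  have hDr2C : ((g1 : ℂ) - g2) * (r : ℂ) ^ 2 = (μ0 : ℂ) - g2 := by exact_mod_cast hDr2
  have hDx2C : ((g1 : ℂ) - g2) * (x : ℂ) ^ 2 = (g1 : ℂ) - μ0 := by exact_mod_cast hDx2
  have hrxC : (r : ℂ) ^ 2 + (x : ℂ) ^ 2 = 1 := by exact_mod_cast hrx
  have hAxXC : (A : ℂ) * x * X = ((g1 : ℂ) - μ0) * r := by exact_mod_cast hAxX
  have hArXC : (A : ℂ) * r * X = ((μ0 : ℂ) - g2) * x := by exact_mod_cast hArX
  have hkC : ((a : ℂ) * R2) * X = ((g1 : ℂ) - g2) * S := by exact_mod_cast hk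
  rw [hn0, hn1]
  funext i
  fin_cases i <;>
    simp [u0, L, H, G, Ω, Matrix.mulVec, dotProduct, Fin.sum_univ_two, he,
      Matrix.one_apply, Matrix.mulVec_diagonal]
  · apply mul_right_cancel₀ hXneC
    linear_combination ((x:ℂ)^2 * r * ((S:ℂ) - Complex.I * X)) * hkC
      - ((a:ℂ) * R2 * X * r * ((S:ℂ) - Complex.I * X)) * hrxC
      + ((r:ℂ) * S * ((S:ℂ) - Complex.I * X)) * hDx2C
      - hAxXC + (((g1:ℂ) - μ0) * r) * hS2C
      - (((g1:ℂ) - μ0) * r * (X:ℂ)^2) * Complex.I_sq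
  · apply mul_right_cancel₀ hXneC
    linear_combination ((x:ℂ) * (r:ℂ)^2) * hkC + ((x:ℂ) * S) * hDr2C
      - ((a:ℂ) * R2 * X * x) * hrxC - ((S:ℂ) - Complex.I * X) * hArXC
end

section
/- Let E0, A, μ0, g1, g2, a be real numbers with A > 0, a > 0, g2 < μ0 < g1, and X = √((g1 − μ0)(μ0 − g2))/A satisfying X² < 1; set r = √((μ0 − g2)/(g1 − g2)), φ = −arcsin(X), and R² = ((g1 − g2)/a)·√(1/X² − 1). Then the 4×4 real stability matrix M (defined in the context) has determinant zero: det M = 0. -/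
open Matrix

set_option maxHeartbeats 2000000 in
/-- The 4×4 real stability matrix `M` of the linearization about the exact
oscillatory state of the nonlinear two-level system has determinant zero. -/
theorem stmt_7 (E0 A μ0 g1 g2 a : ℝ) (hA : 0 < A) (ha : 0 < a)
    (h1 : g2 < μ0) (h2 : μ0 < g1)
    (X : ℝ) (hX : X = Real.sqrt ((g1 - μ0) * (μ0 - g2)) / A) (hX2 : X ^ 2 < 1) :
    let r : ℝ := Real.sqrt ((μ0 - g2) / (g1 - g2))
    let φ : ℝ := -Real.arcsin X
    let R2 : ℝ := ((g1 - g2) / a) * Real.sqrt (1 / X ^ 2 - 1)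
    let M : Matrix (Fin 4) (Fin 4) ℝ :=
      !![μ0 - g1 + a * R2 * r ^ 2 * Real.sin (2 * φ),
          a * R2 * (2 * r ^ 2 - 1) - a * R2 * r ^ 2 * Real.cos (2 * φ), 0, A;
        -(a * R2 * (2 * r ^ 2 - 1)) - a * R2 * r ^ 2 * Real.cos (2 * φ),
          μ0 - g1 - a * R2 * r ^ 2 * Real.sin (2 * φ), -A, 0;
        0, A, μ0 - g2, -(a * R2 * (2 * r ^ 2 - 1)) - a * R2 * (1 - r ^ 2);
        -A, 0, a * R2 * (2 * r ^ 2 - 1) - a * R2 * (1 - r ^ 2), μ0 - g2]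
    M.det = 0 := by
  intro r φ R2 M
  have hg12 : (0:ℝ) < g1 - g2 := by linarith
  have hXpos : 0 < X := by
    rw [hX]
    exact div_pos (Real.sqrt_pos.mpr (mul_pos (by linarith) (by linarith))) hA
  have hX1 : X < 1 := by nlinarith
  have hXne : X ≠ 0 := ne_of_gt hXpos
  have hAX : A ^ 2 * X ^ 2 = (g1 - μ0) * (μ0 - g2) := by
    have hax : A * X = Real.sqrt ((g1 - μ0) * (μ0 - g2)) := by
      rw [hX]; field_simp
    have : (A * X) ^ 2 = (g1 - μ0) * (μ0 - g2) := by
      rw [hax]; exact Real.sq_sqrt (by nlinarith)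
    nlinarith [this]
  set u := Real.sqrt (1 / X ^ 2 - 1) with hu
  have h0u : (0:ℝ) ≤ 1 / X ^ 2 - 1 := by
    rw [sub_nonneg, le_div_iff₀ (by positivity)]
    nlinarith
  have hu2 : u ^ 2 * X ^ 2 = 1 - X ^ 2 := by
    have := Real.sq_sqrt h0u
    rw [hu, this]
    field_simp
  have hune : (0:ℝ) ≤ u := Real.sqrt_nonneg _
  have hc : Real.sqrt (1 - X ^ 2) = u * X := by
    rw [show (1:ℝ) - X ^ 2 = (u * X) ^ 2 by rw [mul_pow]; linarith [hu2]]
    exact Real.sqrt_sq (mul_nonneg hune hXpos.le)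
  have hsin : Real.sin (2 * φ) = -(2 * X ^ 2 * u) := by
    show Real.sin (2 * -Real.arcsin X) = -(2 * X ^ 2 * u)
    rw [mul_neg, Real.sin_neg, Real.sin_two_mul,
      Real.sin_arcsin (by linarith) (by linarith), Real.cos_arcsin, hc]
    ring
  have hcos : Real.cos (2 * φ) = 1 - 2 * X ^ 2 := by
    show Real.cos (2 * -Real.arcsin X) = 1 - 2 * X ^ 2
    rw [mul_neg, Real.cos_neg, Real.cos_two_mul, Real.cos_arcsin,
      Real.sq_sqrt (by nlinarith : (0:ℝ) ≤ 1 - X ^ 2)]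
    ring
  have hr : r ^ 2 = (μ0 - g2) / (g1 - g2) :=
    Real.sq_sqrt (div_nonneg (by linarith) (by linarith))
  have ha' : a ≠ 0 := ne_of_gt ha
  have hg' : g1 - g2 ≠ 0 := ne_of_gt hg12
  have hP : a * R2 * r ^ 2 = (μ0 - g2) * u := by
    show a * (((g1 - g2) / a) * u) * r ^ 2 = (μ0 - g2) * u
    rw [hr]; field_simp
  have hQ : a * R2 * (2 * r ^ 2 - 1) = (2 * μ0 - g1 - g2) * u := by
    show a * (((g1 - g2) / a) * u) * (2 * r ^ 2 - 1) = (2 * μ0 - g1 - g2) * u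
    rw [hr]; field_simp; ring
  have hS : a * R2 * (1 - r ^ 2) = (g1 - μ0) * u := by
    show a * (((g1 - g2) / a) * u) * (1 - r ^ 2) = (g1 - μ0) * u
    rw [hr]; field_simp; ring
  show M.det = 0
  have hM : M.det = Matrix.det
      !![μ0 - g1 + (μ0 - g2) * u * -(2 * X ^ 2 * u),
          (2 * μ0 - g1 - g2) * u - (μ0 - g2) * u * (1 - 2 * X ^ 2), 0, A;
        -((2 * μ0 - g1 - g2) * u) - (μ0 - g2) * u * (1 - 2 * X ^ 2),
          μ0 - g1 - (μ0 - g2) * u * -(2 * X ^ 2 * u), -A, 0;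
        0, A, μ0 - g2, -((2 * μ0 - g1 - g2) * u) - (g1 - μ0) * u;
        -A, 0, (2 * μ0 - g1 - g2) * u - (g1 - μ0) * u, μ0 - g2] := by
    rw [show M = !![μ0 - g1 + a * R2 * r ^ 2 * Real.sin (2 * φ),
          a * R2 * (2 * r ^ 2 - 1) - a * R2 * r ^ 2 * Real.cos (2 * φ), 0, A;
        -(a * R2 * (2 * r ^ 2 - 1)) - a * R2 * r ^ 2 * Real.cos (2 * φ),
          μ0 - g1 - a * R2 * r ^ 2 * Real.sin (2 * φ), -A, 0;
        0, A, μ0 - g2, -(a * R2 * (2 * r ^ 2 - 1)) - a * R2 * (1 - r ^ 2);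
        -A, 0, a * R2 * (2 * r ^ 2 - 1) - a * R2 * (1 - r ^ 2), μ0 - g2] from rfl,
      hsin, hcos, hP, hQ, hS]
  rw [hM]
  simp (config := { decide := true }) [Matrix.det_succ_row_zero, Fin.sum_univ_succ,
    Fin.succAbove, Matrix.cons_val_succ, show (Fin.castSucc 2 : Fin 4) = 2 from rfl]
  have h4 : X ^ 4 ≠ 0 := pow_ne_zero _ hXne
  apply mul_left_cancel₀ h4
  rw [mul_zero]
  linear_combination ((2) * g1 * g2^3 + (5) * g1^2 * g2^2 + (2) * g1^3 * g2 + (-2) * μ0 * g2^3 + (-16) * μ0 * g1 * g2^2 + (-16) * μ0 * g1^2 * g2 + (-2) * μ0 * g1^3 + (11) * μ0^2 * g2^2 + (32) * μ0^2 * g1 * g2 + (11) * μ0^2 * g1^2 + (-18) * μ0^3 * g2 + (-18) * μ0^3 * g1 + (9) * μ0^4 + (-3) * X^2 * g1^2 * g2^2 + (6) * X^2 * μ0 * g1 * g2^2 + (6) * X^2 * μ0 * g1^2 * g2 + (-3) * X^2 * μ0^2 * g2^2 + (-12) * X^2 * μ0^2 * g1 * g2 + (-3) * X^2 * μ0^2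 * g1^2 + (6) * X^2 * μ0^3 * g2 + (6) * X^2 * μ0^3 * g1 + (-3) * X^2 * μ0^4 + (2) * X^2 * A^2 * g2^2 + (6) * X^2 * A^2 * g1 * g2 + (2) * X^2 * A^2 * g1^2 + (-10) * X^2 * A^2 * μ0 * g2 + (-10) * X^2 * A^2 * μ0 * g1 + (10) * X^2 * A^2 * μ0^2 + (2) * X^2 * u^2 * g1 * g2^3 + (5) * X^2 * u^2 * g1^2 * g2^2 + (2) * X^2 * u^2 * g1^3 * g2 + (-2) * X^2 * u^2 * μ0 * g2^3 + (-16) * X^2 * u^2 * μ0 * g1 * g2^2 + (-16) * X^2 * u^2 * μ0 * g1^2 * g2 + (-2) * X^2 * u^2 * μ0 * g1^3 + (11) * X^2 * u^2 * μ0^2 * g2^2 + (32) * X^2 * u^2 * μ0^2 * g1 * g2 + (11) * X^2 * u^2 * μ0^2 * g1^2 + (-18) * X^2 * u^2 * μ0^3 * g2 + (-18) * X^2 * u^2 * μ0^3 * g1 + (9) * X^2 * u^2 * μ0^4 + (-4) * X^4 * A^2 * g1 * g2 + (4) * X^4 * A^2 * μ0 * g2 + (4) * X^4 * A^2 * μ0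 * g1 + (-4) * X^4 * A^2 * μ0^2 + (-4) * X^6 * u^2 * g2^4 + (16) * X^6 * u^2 * μ0 * g2^3 + (-24) * X^6 * u^2 * μ0^2 * g2^2 + (16) * X^6 * u^2 * μ0^3 * g2 + (-4) * X^6 * u^2 * μ0^4 + (-4) * X^6 * u^4 * g2^4 + (-8) * X^6 * u^4 * g1 * g2^3 + (24) * X^6 * u^4 * μ0 * g2^3 + (24) * X^6 * u^4 * μ0 * g1 * g2^2 + (-48) * X^6 * u^4 * μ0^2 * g2^2 + (-24) * X^6 * u^4 * μ0^2 * g1 * g2 + (40) * X^6 * u^4 * μ0^3 * g2 + (8) * X^6 * u^4 * μ0^3 * g1 + (-12) * X^6 * u^4 * μ0^4) * hu2 + ((2) * g2^2 + (5) * g1 * g2 + (2) * g1^2 + (-9) * μ0 * g2 + (-9) * μ0 * g1 + (9) * μ0^2 + (-2) * X^2 * g2^2 + (-8) * X^2 * g1 * g2 + (-2) * X^2 * g1^2 + (12) * X^2 * μ0 * g2 + (12) * X^2 * μ0 * g1 + (-12) * X^2 * μ0^2 + (1) * X^2 * A^2 + (4) * X^4 * g1 * g2 + (-4) * X^4 *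 μ0 * g2 + (-4) * X^4 * μ0 * g1 + (4) * X^4 * μ0^2) * hAX
end

section
/- Let E0, A, μ0, g1, g2, a be real numbers with A > 0, a > 0, g2 < μ0 < g1, and X = √((g1 − μ0)(μ0 − g2))/A satisfying X² < 1; set r = √((μ0 − g2)/(g1 − g2)), φ = −arcsin(X), and R² = ((g1 − g2)/a)·√(1/X² − 1). Then the coefficient of σ¹ in the characteristic polynomial det(σ·I₄ − M) of the 4×4 real stability matrix M (defined in the context) equals m₂ = 8A²(1 − X²)·(μ0 − (g1 + g2)/2). -/
open Matrix

private lemma eval_charpoly' {n : ℕ} (M : Matrix (Fin n) (Fin n) ℝ) (t : ℝ) :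
    M.charpoly.eval t =
      (Matrix.of (fun i j => (if i = j then t else 0) - M i j)).det := by
  rw [Matrix.charpoly, ← Polynomial.coe_evalRingHom, RingHom.map_det]
  congr 1
  ext i j
  by_cases h : i = j
  · subst h
    simp [Matrix.charmatrix_apply_eq]
  · simp [Matrix.charmatrix_apply_ne _ _ _ h, h]

private lemma det_fin_four' {R : Type*} [CommRing R] (M : Matrix (Fin 4) (Fin 4) R) :
    M.det = M 0 0*M 1 1*M 2 2*M 3 3 - M 0 0*M 1 1*M 2 3*M 3 2 - M 0 0*M 1 2*M 2 1*M 3 3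
      + M 0 0*M 1 2*M 2 3*M 3 1 + M 0 0*M 1 3*M 2 1*M 3 2 - M 0 0*M 1 3*M 2 2*M 3 1
      - M 0 1*M 1 0*M 2 2*M 3 3 + M 0 1*M 1 0*M 2 3*M 3 2 + M 0 1*M 1 2*M 2 0*M 3 3
      - M 0 1*M 1 2*M 2 3*M 3 0 - M 0 1*M 1 3*M 2 0*M 3 2 + M 0 1*M 1 3*M 2 2*M 3 0
      + M 0 2*M 1 0*M 2 1*M 3 3 - M 0 2*M 1 0*M 2 3*M 3 1 - M 0 2*M 1 1*M 2 0*M 3 3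
      + M 0 2*M 1 1*M 2 3*M 3 0 + M 0 2*M 1 3*M 2 0*M 3 1 - M 0 2*M 1 3*M 2 1*M 3 0
      - M 0 3*M 1 0*M 2 1*M 3 2 + M 0 3*M 1 0*M 2 2*M 3 1 + M 0 3*M 1 1*M 2 0*M 3 2
      - M 0 3*M 1 1*M 2 2*M 3 0 - M 0 3*M 1 2*M 2 0*M 3 1 + M 0 3*M 1 2*M 2 1*M 3 0 := by
  rw [Matrix.det_succ_row_zero]
  simp [Fin.sum_univ_succ, Matrix.det_fin_three, Fin.succAbove, Matrix.submatrix_apply,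
    show (Fin.succ 2 : Fin 4) = 3 from rfl, show ((2 : Fin 3).castSucc : Fin 4) = 2 from rfl,
    show ((1:Fin 4) < 3) = True by decide, show ((1:Fin 3) < 2) = True by decide]
  ring

set_option maxHeartbeats 1000000 in
/-- The coefficient of `σ¹` in the characteristic polynomial `det(σ I₄ - M)` of the
4×4 stability matrix `M` equals `m₂ = 8A²(1 - X²)(μ₀ - (g₁+g₂)/2)`. -/
theorem stmt_8 (E0 A μ0 g1 g2 a : ℝ) (hA : 0 < A) (ha : 0 < a)
    (h1 : g2 < μ0) (h2 : μ0 < g1)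
    (X : ℝ) (hX : X = Real.sqrt ((g1 - μ0) * (μ0 - g2)) / A) (hX2 : X ^ 2 < 1) :
    let r : ℝ := Real.sqrt ((μ0 - g2) / (g1 - g2))
    let φ : ℝ := -Real.arcsin X
    let R2 : ℝ := ((g1 - g2) / a) * Real.sqrt (1 / X ^ 2 - 1)
    let M : Matrix (Fin 4) (Fin 4) ℝ :=
      !![μ0 - g1 + a * R2 * r ^ 2 * Real.sin (2 * φ),
          a * R2 * (2 * r ^ 2 - 1) - a * R2 * r ^ 2 * Real.cos (2 * φ), 0, A;
        -(a * R2 * (2 * r ^ 2 - 1)) - a * R2 * r ^ 2 * Real.cos (2 * φ),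
          μ0 - g1 - a * R2 * r ^ 2 * Real.sin (2 * φ), -A, 0;
        0, A, μ0 - g2, -(a * R2 * (2 * r ^ 2 - 1)) - a * R2 * (1 - r ^ 2);
        -A, 0, a * R2 * (2 * r ^ 2 - 1) - a * R2 * (1 - r ^ 2), μ0 - g2]
    M.charpoly.coeff 1 = 8 * A ^ 2 * (1 - X ^ 2) * (μ0 - (g1 + g2) / 2) := by
  intro r φ R2 M
  set c : ℝ := Real.sqrt (1 / X ^ 2 - 1) with hcdef
  have hg21 : (0:ℝ) < g1 - g2 := by linarith
  have hg21' : g1 - g2 ≠ 0 := ne_of_gt hg21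
  have hXpos : 0 < X := by
    rw [hX]
    exact div_pos (Real.sqrt_pos.mpr (mul_pos (by linarith) (by linarith))) hA
  have hXne : X ≠ 0 := ne_of_gt hXpos
  have hX1 : X < 1 := by nlinarith
  have h0 : (0:ℝ) ≤ 1 / X ^ 2 - 1 := by
    rw [sub_nonneg, le_div_iff₀ (by positivity)]
    nlinarith
  have hcnn : 0 ≤ c := Real.sqrt_nonneg _
  have hc2 : X ^ 2 * c ^ 2 = 1 - X ^ 2 := by
    rw [hcdef, Real.sq_sqrt h0]
    field_simp
  have hAX : A ^ 2 * X ^ 2 = (g1 - μ0) * (μ0 - g2) := by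
    have hXA : X * A = Real.sqrt ((g1 - μ0) * (μ0 - g2)) := by
      rw [hX]; field_simp
    have := Real.sq_sqrt (show (0:ℝ) ≤ (g1 - μ0) * (μ0 - g2) by nlinarith)
    rw [← hXA] at this
    nlinarith [this]
  have hr2 : r ^ 2 = (μ0 - g2) / (g1 - g2) := by
    show (Real.sqrt ((μ0 - g2) / (g1 - g2))) ^ 2 = _
    exact Real.sq_sqrt (div_nonneg (by linarith) (by linarith))
  have haR2 : a * R2 = (g1 - g2) * c := by
    show a * (((g1 - g2) / a) * c) = (g1 - g2) * c
    field_simp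
  have haR2r2 : a * R2 * r ^ 2 = (μ0 - g2) * c := by
    rw [haR2, hr2]; field_simp
  have h21 : a * R2 * (2 * r ^ 2 - 1) = (2 * (μ0 - g2) - (g1 - g2)) * c := by
    rw [haR2, hr2]; field_simp
  have h1r : a * R2 * (1 - r ^ 2) = (g1 - μ0) * c := by
    rw [haR2, hr2]; field_simp; ring
  have hXc : X * c = Real.sqrt (1 - X ^ 2) := by
    have h' : 1 - X ^ 2 = (X * c) ^ 2 := by ring_nf; nlinarith [hc2]
    rw [h', Real.sqrt_sq (by positivity)]
  have hsinφ : Real.sin φ = -X := by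
    show Real.sin (-Real.arcsin X) = -X
    rw [Real.sin_neg, Real.sin_arcsin (by linarith) (by linarith)]
  have hcosφ : Real.cos φ = X * c := by
    show Real.cos (-Real.arcsin X) = X * c
    rw [Real.cos_neg, Real.cos_arcsin, hXc]
  have hsin : Real.sin (2 * φ) = -(2 * (X ^ 2 * c) * X⁻¹ * X) := by
    rw [Real.sin_two_mul, hsinφ, hcosφ]
    field_simp
  have hsin' : Real.sin (2 * φ) = -(2 * (X ^ 2 * c)) := by
    rw [hsin]; field_simp
  have hcos : Real.cos (2 * φ) = 1 - 2 * X ^ 2 := by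
    rw [Real.cos_two_mul, hcosφ]
    nlinarith [hc2]
  have Esin : a * R2 * r ^ 2 * Real.sin (2 * φ) = -(2 * (1 - X ^ 2) * (μ0 - g2)) := by
    rw [haR2r2, hsin']
    linear_combination (-2 * (μ0 - g2)) * hc2
  have Ecos : a * R2 * r ^ 2 * Real.cos (2 * φ) = (μ0 - g2) * (1 - 2 * X ^ 2) * c := by
    rw [haR2r2, hcos]; ring
  have hM : M = !![μ0 - g1 + -(2 * (1 - X ^ 2) * (μ0 - g2)),
      (2 * (μ0 - g2) - (g1 - g2)) * c - (μ0 - g2) * (1 - 2 * X ^ 2) * c, 0, A;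
      -((2 * (μ0 - g2) - (g1 - g2)) * c) - (μ0 - g2) * (1 - 2 * X ^ 2) * c,
      μ0 - g1 - -(2 * (1 - X ^ 2) * (μ0 - g2)), -A, 0;
      0, A, μ0 - g2, -((2 * (μ0 - g2) - (g1 - g2)) * c) - (g1 - μ0) * c;
      -A, 0, (2 * (μ0 - g2) - (g1 - g2)) * c - (g1 - μ0) * c, μ0 - g2] := by
    show (!![μ0 - g1 + a * R2 * r ^ 2 * Real.sin (2 * φ),
          a * R2 * (2 * r ^ 2 - 1) - a * R2 * r ^ 2 * Real.cos (2 * φ), 0, A;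
        -(a * R2 * (2 * r ^ 2 - 1)) - a * R2 * r ^ 2 * Real.cos (2 * φ),
          μ0 - g1 - a * R2 * r ^ 2 * Real.sin (2 * φ), -A, 0;
        0, A, μ0 - g2, -(a * R2 * (2 * r ^ 2 - 1)) - a * R2 * (1 - r ^ 2);
        -A, 0, a * R2 * (2 * r ^ 2 - 1) - a * R2 * (1 - r ^ 2), μ0 - g2]) = _
    rw [Esin, Ecos, h21, h1r]
  rw [hM]
  set M' : Matrix (Fin 4) (Fin 4) ℝ := !![μ0 - g1 + -(2 * (1 - X ^ 2) * (μ0 - g2)),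
      (2 * (μ0 - g2) - (g1 - g2)) * c - (μ0 - g2) * (1 - 2 * X ^ 2) * c, 0, A;
      -((2 * (μ0 - g2) - (g1 - g2)) * c) - (μ0 - g2) * (1 - 2 * X ^ 2) * c,
      μ0 - g1 - -(2 * (1 - X ^ 2) * (μ0 - g2)), -A, 0;
      0, A, μ0 - g2, -((2 * (μ0 - g2) - (g1 - g2)) * c) - (g1 - μ0) * c;
      -A, 0, (2 * (μ0 - g2) - (g1 - g2)) * c - (g1 - μ0) * c, μ0 - g2] with hM'
  set p : Polynomial ℝ := M'.charpoly with hp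
  have hdeg : p.natDegree = 4 := by
    rw [hp, Matrix.charpoly_natDegree_eq_dim]
    simp
  have hco4 : p.coeff 4 = 1 := by
    have hm : p.Monic := Matrix.charpoly_monic M'
    rw [← hdeg]
    exact hm.coeff_natDegree
  have hev : ∀ t : ℝ, p.eval t =
      p.coeff 0 + p.coeff 1 * t + p.coeff 2 * t ^ 2 + p.coeff 3 * t ^ 3 + t ^ 4 := by
    intro t
    rw [Polynomial.eval_eq_sum_range' (n := 5) (by rw [hdeg]; norm_num) t]
    simp [Finset.sum_range_succ, hco4]
    try ring
  have h12 : 12 * p.coeff 1 =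
      8 * (p.eval 1 - p.eval (-1)) - (p.eval 2 - p.eval (-2)) := by
    rw [hev 1, hev (-1), hev 2, hev (-2)]; ring
  have hevdet : ∀ t : ℝ, p.eval t =
      (Matrix.of (fun i j => (if i = j then t else 0) - M' i j)).det := by
    intro t; rw [hp]; exact eval_charpoly' _ t
  simp only [hevdet] at h12
  simp [det_fin_four', hM', Matrix.of_apply, Matrix.cons_val', Matrix.cons_val_zero,
    Matrix.cons_val_one, Matrix.head_cons, Matrix.empty_val', Matrix.cons_val_fin_one,
    Matrix.head_fin_const, Fin.isValue] at h12
  have key : X ^ 2 * 12 * p.coeff 1 =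
      X ^ 2 * 12 * (8 * A ^ 2 * (1 - X ^ 2) * (μ0 - (g1 + g2) / 2)) := by
    linear_combination (X ^ 2) * h12 +
      (72*g1*g2^2 + 72*g1^2*g2 + (-72)*μ0*g2^2 + (-288)*μ0*g1*g2 + (-72)*μ0*g1^2
        + 216*μ0^2*g2 + 216*μ0^2*g1 + (-144)*μ0^3 + 96*X^2*g2^3 + (-288)*X^2*μ0*g2^2
        + 288*X^2*μ0^2*g2 + (-96)*X^2*μ0^3 + (-96)*X^4*g2^3 + 288*X^4*μ0*g2^2
        + (-288)*X^4*μ0^2*g2 + 96*X^4*μ0^3) * hc2 +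
      (72*g2 + 72*g1 + (-144)*μ0 + (-48)*X^2*g2 + (-48)*X^2*g1 + 96*X^2*μ0) * hAX
  exact mul_left_cancel₀ (by positivity : (X ^ 2 * 12 : ℝ) ≠ 0) key
end

section
/- Let γ, μ2, χ ∈ ℂ with γ ≠ 0 and χ⁴ = μ2/(2γ), let U, μ0 ∈ ℝ, and let n ∈ ℕ. Define ψₙ : ℝ → ℂ by ψₙ(x) = exp( (U/(2γ))·x − χ²·x²/2 ) · Heₙ(√2·χ·x), where Heₙ is the n-th probabilists' Hermite polynomial evaluated over ℂ. Then for all x ∈ ℝ, −iU·ψₙ'(x) + iγ·ψₙ''(x) − (i/2)·μ2·x²·ψₙ(x) + i·μ0·ψₙ(x) = ωₙ·ψₙ(x), where ωₙ = i·(μ0 − U²/(4γ) − (2n+1)·γ·χ²). -/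
open Complex Polynomial

lemma hermite_deriv_succ : ∀ n : ℕ, derivative (hermite (n+1)) = ((n:ℤ)+1) • hermite n := by
  intro n
  induction n with
  | zero => simp [hermite_one, hermite_zero]
  | succ n ih =>
    rw [hermite_succ (n+1), derivative_sub, derivative_mul, derivative_X, ih,
      derivative_smul, hermite_succ n]
    simp only [zsmul_eq_mul]
    push_cast
    ring

lemma hermite_ode (n : ℕ) : derivative (derivative (hermite n)) =
    X * derivative (hermite n) - (n:ℤ) • hermite n := by
  cases n with
  | zero => simp [hermite_zero]
  | succ n =>
    rw [hermite_deriv_succ n, derivative_smul]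
    conv_rhs => rw [hermite_succ n]
    simp only [zsmul_eq_mul]
    push_cast
    ring

/-- The functions `ψₙ(x) = exp((U/(2γ))x - χ²x²/2) Heₙ(√2 χ x)`, with `χ⁴ = μ₂/(2γ)`
and `Heₙ` the probabilists' Hermite polynomial, are eigenfunctions of the linear
inhomogeneous complex Ginzburg–Landau operator with eigenvalues
`ωₙ = i(μ₀ - U²/(4γ) - (2n+1)γχ²)`. -/
theorem stmt_13 (γ μ2 χ : ℂ) (hγ : γ ≠ 0) (hχ : χ ^ 4 = μ2 / (2 * γ)) (U μ0 : ℝ)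
    (n : ℕ) (ψ : ℝ → ℂ)
    (hψ : ∀ x : ℝ, ψ x =
      Complex.exp (((U : ℂ) / (2 * γ)) * (x : ℂ) - χ ^ 2 * (x : ℂ) ^ 2 / 2) *
        Polynomial.aeval ((Real.sqrt 2 : ℂ) * χ * (x : ℂ)) (Polynomial.hermite n)) :
    ∀ x : ℝ,
      -Complex.I * (U : ℂ) * deriv ψ x + Complex.I * γ * deriv (deriv ψ) x
        - (Complex.I / 2) * μ2 * (x : ℂ) ^ 2 * ψ x + Complex.I * (μ0 : ℂ) * ψ x
      = (Complex.I * ((μ0 : ℂ) - (U : ℂ) ^ 2 / (4 * γ) - (2 * (n : ℂ) + 1) * γ * χ ^ 2))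
          * ψ x := by
  set a : ℂ := (U : ℂ) / (2 * γ) with ha
  set c : ℂ := χ ^ 2 with hc
  set s : ℂ := (Real.sqrt 2 : ℂ) * χ with hs
  set Pc : ℂ[X] := (hermite n).map (algebraMap ℤ ℂ) with hPc
  have hPeval : ∀ y : ℂ, (aeval y) (hermite n) = Pc.eval y := by
    intro y; rw [hPc, eval_map, aeval_def]
  set E : ℂ → ℂ := fun z => Complex.exp (a * z - c * z ^ 2 / 2) with hE
  set g : ℂ → ℂ := fun z => E z * Pc.eval (s * z) with hg
  set g1 : ℂ → ℂ := fun z =>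
    E z * ((a - c * z) * Pc.eval (s * z) + s * (derivative Pc).eval (s * z)) with hg1
  set g2 : ℂ → ℂ := fun z =>
    E z * (((a - c * z) ^ 2 - c) * Pc.eval (s * z)
      + 2 * (a - c * z) * s * (derivative Pc).eval (s * z)
      + s ^ 2 * (derivative (derivative Pc)).eval (s * z)) with hg2
  have hsz : ∀ z : ℂ, HasDerivAt (fun z : ℂ => s * z) s z := by
    intro z; simpa using (hasDerivAt_id z).const_mul s
  have hEd : ∀ z : ℂ, HasDerivAt E ((a - c * z) * E z) z := by
    intro z
    have h1 : HasDerivAt (fun z : ℂ => a * z) a z := by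
      simpa using (hasDerivAt_id z).const_mul a
    have h2 : HasDerivAt (fun z : ℂ => c * z ^ 2 / 2) (c * z) z := by
      have h := ((hasDerivAt_pow 2 z).const_mul c).div_const 2
      refine h.congr_deriv ?_
      push_cast
      ring
    have h3 := (h1.sub h2).cexp
    rw [hE]
    refine h3.congr_deriv ?_
    simp only [Pi.sub_apply]
    ring
  have hPd : ∀ z : ℂ, HasDerivAt (fun z => Pc.eval (s * z))
      (s * (derivative Pc).eval (s * z)) z := by
    intro z
    have h := (Pc.hasDerivAt (s * z)).comp z (hsz z)
    rw [Function.comp_def] at h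
    refine h.congr_deriv ?_
    ring
  have hPd2 : ∀ z : ℂ, HasDerivAt (fun z => (derivative Pc).eval (s * z))
      (s * (derivative (derivative Pc)).eval (s * z)) z := by
    intro z
    have h := ((derivative Pc).hasDerivAt (s * z)).comp z (hsz z)
    rw [Function.comp_def] at h
    refine h.congr_deriv ?_
    ring
  have hgd : ∀ z : ℂ, HasDerivAt g (g1 z) z := by
    intro z
    have h := (hEd z).mul (hPd z)
    rw [hg]
    refine h.congr_deriv ?_
    rw [hg1]
    ring
  have hg1d : ∀ z : ℂ, HasDerivAt g1 (g2 z) z := by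
    intro z
    have hQ : HasDerivAt (fun z : ℂ =>
        (a - c * z) * Pc.eval (s * z) + s * (derivative Pc).eval (s * z))
        ((-c) * Pc.eval (s * z) + (a - c * z) * (s * (derivative Pc).eval (s * z))
          + s * (s * (derivative (derivative Pc)).eval (s * z))) z := by
      have h1 : HasDerivAt (fun z : ℂ => a - c * z) (-c) z := by
        exact ((hasDerivAt_const z a).sub ((hasDerivAt_id z).const_mul c)).congr_deriv (by simp)
      exact (h1.mul (hPd z)).add ((hPd2 z).const_mul s)
    have h := (hEd z).mul hQ
    rw [hg1]
    refine h.congr_deriv ?_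
    rw [hg2]
    ring
  have hψfun : ψ = fun x : ℝ => g (x : ℂ) := by
    funext x
    rw [hψ x, hPeval]
  have hd1 : ∀ x : ℝ, deriv ψ x = g1 (x : ℂ) := by
    intro x
    rw [hψfun]
    exact ((hgd (x : ℂ)).comp_ofReal).deriv
  have hd2 : ∀ x : ℝ, deriv (deriv ψ) x = g2 (x : ℂ) := by
    intro x
    have h : deriv ψ = fun y : ℝ => g1 (y : ℂ) := funext hd1
    rw [h]
    exact ((hg1d (x : ℂ)).comp_ofReal).deriv
  intro x
  rw [hd1 x, hd2 x, hψfun]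
  have hODE : (derivative (derivative Pc)).eval (s * (x : ℂ))
      = (s * (x : ℂ)) * (derivative Pc).eval (s * (x : ℂ)) - (n : ℂ) * Pc.eval (s * (x : ℂ)) := by
    have h := congrArg (fun p : ℤ[X] => (p.map (algebraMap ℤ ℂ)).eval (s * (x : ℂ)))
      (hermite_ode n)
    simpa [hPc, derivative_map, zsmul_eq_mul] using h
  have hμ2 : μ2 = χ ^ 4 * (2 * γ) := by
    rw [eq_div_iff (by simp [hγ] : (2:ℂ) * γ ≠ 0)] at hχ
    exact hχ.symm
  have hs2 : s ^ 2 = 2 * χ ^ 2 := by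
    rw [hs, mul_pow, ← Complex.ofReal_pow, Real.sq_sqrt (by norm_num : (0:ℝ) ≤ 2)]
    norm_num
  have h1 : (U : ℂ) = 2 * γ * a := by
    rw [ha]; field_simp
  have h2 : (U : ℂ) ^ 2 / (4 * γ) = γ * a ^ 2 := by
    rw [ha]; field_simp; ring
  clear_value a
  simp only [hg, hg1, hg2, hODE, hs2, hμ2, hc, h2]
  simp only [h1]
  ring
end

section
/- Let γᵣ > 0, μ2ᵣ > 0 and μ0 be real numbers, and let u : ℝ → ℂ be continuously differentiable with compact support and not identically zero. Suppose u satisfies the global-mode stationarity condition μ0 · ∫ℝ |u(x)|² dx = γᵣ · ∫ℝ |u'(x)|² dx + (μ2ᵣ/2) · ∫ℝ x²·|u(x)|² dx (i.e., the real part of ⟨u, (μ0 + 𝓖)u⟩ vanishes, so that the L² norm of the corresponding solution is constant in time). Then μ0 ≥ √(μ2ᵣ·γᵣ/2). -/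
open MeasureTheory

/-- Necessary condition for a global mode: if a nonzero compactly supported `C¹`
function satisfies the stationarity condition
`μ₀ ∫|u|² = γᵣ ∫|u'|² + (μ₂ᵣ/2) ∫ x²|u|²`, then `μ₀ ≥ √(μ₂ᵣ γᵣ/2)`. -/
theorem stmt_15 (γr μ2r μ0 : ℝ) (hγr : 0 < γr) (hμ2r : 0 < μ2r)
    (u : ℝ → ℂ) (hu : ContDiff ℝ 1 u) (hsupp : HasCompactSupport u) (hne : u ≠ 0)
    (heq : μ0 * (∫ x : ℝ, ‖u x‖ ^ 2)
      = γr * (∫ x : ℝ, ‖deriv u x‖ ^ 2)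
        + (μ2r / 2) * ∫ x : ℝ, x ^ 2 * ‖u x‖ ^ 2) :
    Real.sqrt (μ2r * γr / 2) ≤ μ0 := by
  have hud : Differentiable ℝ u := hu.differentiable one_ne_zero
  have hu'c : Continuous (deriv u) := hu.continuous_deriv le_rfl
  have hu'supp : HasCompactSupport (deriv u) := hsupp.deriv
  set f : ℝ → ℝ := fun x => ‖u x‖ ^ 2 with hfdef
  have hfC : ContDiff ℝ 1 f := hu.norm_sq (𝕜 := ℂ)
  have hfc : Continuous f := hfC.continuous
  have hfsupp : HasCompactSupport f := by
    have := hsupp.comp_left (g := fun z : ℂ => ‖z‖ ^ 2) (by simp)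
    exact this
  have hfint : Integrable f := hfc.integrable_of_hasCompactSupport hfsupp
  -- the derivative of f
  have hfderiv : ∀ x, HasDerivAt f (2 * inner ℝ (u x) (deriv u x)) x := fun x =>
    ((hud x).hasDerivAt).norm_sq
  have hfderiv' : ∀ x, deriv f x = 2 * inner ℝ (u x) (deriv u x) := fun x =>
    (hfderiv x).deriv
  -- integration by parts : ∫ f = - ∫ x * f'
  set g : ℝ → ℝ := fun x => x * f x with hgdef
  have hgC : ContDiff ℝ 1 g := contDiff_id.mul hfC
  have hgsupp : HasCompactSupport g := hfsupp.mul_left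
  have hgderiv : ∀ x, deriv g x = f x + x * deriv f x := by
    intro x
    have h1 : HasDerivAt g (1 * f x + x * deriv f x) x :=
      (hasDerivAt_id x).mul ((hfC.differentiable one_ne_zero x).hasDerivAt)
    simpa using h1.deriv
  have hderivg_int : Integrable (deriv g) :=
    (hgC.continuous_deriv le_rfl).integrable_of_hasCompactSupport hgsupp.deriv
  have hxf'c : Continuous (fun x => x * deriv f x) := by
    have : Continuous (deriv f) := hfC.continuous_deriv le_rfl
    exact continuous_id.mul this
  have hxf'supp : HasCompactSupport (fun x : ℝ => x * deriv f x) := hfsupp.deriv.mul_left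
  have hxf'int : Integrable (fun x => x * deriv f x) :=
    hxf'c.integrable_of_hasCompactSupport hxf'supp
  have hzero : ∫ x : ℝ, deriv g x = 0 := by
    rw [← intervalIntegral.integral_Iic_add_Ioi (b := (0:ℝ)) hderivg_int.integrableOn hderivg_int.integrableOn,
      HasCompactSupport.integral_Iic_deriv_eq hgC hgsupp 0,
      HasCompactSupport.integral_Ioi_deriv_eq hgC hgsupp 0]
    simp [hgdef]
  have hparts : (∫ x : ℝ, f x) = - ∫ x : ℝ, x * deriv f x := by
    have : ∫ x : ℝ, deriv g x = (∫ x : ℝ, f x) + ∫ x : ℝ, x * deriv f x := by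
      rw [← integral_add hfint hxf'int]
      exact integral_congr_ae (Filter.Eventually.of_forall fun x => hgderiv x)
    rw [this] at hzero
    linarith
  -- positivity of ∫ f
  have hI : 0 < ∫ x : ℝ, f x := by
    rw [integral_pos_iff_support_of_nonneg (fun x => sq_nonneg _) hfint]
    have hsup : Function.support f = Function.support u := by
      ext x; simp [hfdef, Function.mem_support, pow_eq_zero_iff]
    rw [hsup]
    have hop : IsOpen (Function.support u) :=
      isOpen_compl_singleton.preimage hu.continuous
    exact hop.measure_pos volume (Function.support_nonempty_iff.mpr hne)
  -- Cauchy-Schwarz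
  set g1 : ℝ → ℝ := fun x => |x| * ‖u x‖ with hg1def
  set h1 : ℝ → ℝ := fun x => ‖deriv u x‖ with hh1def
  have hg1c : Continuous g1 := continuous_abs.mul hu.continuous.norm
  have hg1supp : HasCompactSupport g1 := (hsupp.norm).mul_left
  have hh1c : Continuous h1 := hu'c.norm
  have hh1supp : HasCompactSupport h1 := hu'supp.norm
  have hpq : Real.HolderConjugate 2 2 := Real.HolderConjugate.two_two
  have hCS : (∫ x : ℝ, g1 x * h1 x)
      ≤ (∫ x : ℝ, g1 x ^ (2:ℝ)) ^ ((1:ℝ)/2) * (∫ x : ℝ, h1 x ^ (2:ℝ)) ^ ((1:ℝ)/2) :=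
    integral_mul_le_Lp_mul_Lq_of_nonneg hpq
      (Filter.Eventually.of_forall fun x => mul_nonneg (abs_nonneg _) (norm_nonneg _))
      (Filter.Eventually.of_forall fun x => norm_nonneg _)
      (by simpa using hg1c.memLp_of_hasCompactSupport (p := 2) hg1supp)
      (by simpa using hh1c.memLp_of_hasCompactSupport (p := 2) hh1supp)
  have hrpow2 : ∀ y : ℝ, y ^ (2:ℝ) = y ^ 2 := fun y => by
    rw [show (2:ℝ) = ((2:ℕ):ℝ) by norm_num, Real.rpow_natCast]
  have hBcalc : (∫ x : ℝ, g1 x ^ (2:ℝ)) = ∫ x : ℝ, x ^ 2 * ‖u x‖ ^ 2 := by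
    refine integral_congr_ae (Filter.Eventually.of_forall fun x => ?_)
    show g1 x ^ (2:ℝ) = x ^ 2 * ‖u x‖ ^ 2
    rw [hrpow2]
    simp [hg1def, mul_pow, sq_abs]
  have hAcalc : (∫ x : ℝ, h1 x ^ (2:ℝ)) = ∫ x : ℝ, ‖deriv u x‖ ^ 2 := by
    refine integral_congr_ae (Filter.Eventually.of_forall fun x => ?_)
    show h1 x ^ (2:ℝ) = ‖deriv u x‖ ^ 2
    rw [hrpow2]
  set A := ∫ x : ℝ, ‖deriv u x‖ ^ 2 with hAdef
  set B := ∫ x : ℝ, x ^ 2 * ‖u x‖ ^ 2 with hBdef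
  have hA0 : 0 ≤ A := integral_nonneg fun x => sq_nonneg _
  have hB0 : 0 ≤ B := integral_nonneg fun x => by positivity
  have hCS' : (∫ x : ℝ, g1 x * h1 x) ≤ Real.sqrt B * Real.sqrt A := by
    rw [hBcalc, hAcalc] at hCS
    calc (∫ x : ℝ, g1 x * h1 x) ≤ B ^ ((1:ℝ)/2) * A ^ ((1:ℝ)/2) := by
          convert hCS using 3
      _ = Real.sqrt B * Real.sqrt A := by
          rw [Real.sqrt_eq_rpow, Real.sqrt_eq_rpow]
  -- pointwise bound on |x * f'|
  have hptwise : ∀ x : ℝ, |x * deriv f x| ≤ 2 * (g1 x * h1 x) := by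
    intro x
    rw [hfderiv' x, abs_mul, abs_mul]
    have h2 : |inner (𝕜 := ℝ) (u x) (deriv u x)| ≤ ‖u x‖ * ‖deriv u x‖ :=
      abs_real_inner_le_norm _ _
    have : |x| * (|(2:ℝ)| * |inner (𝕜 := ℝ) (u x) (deriv u x)|)
        ≤ |x| * (2 * (‖u x‖ * ‖deriv u x‖)) := by
      apply mul_le_mul_of_nonneg_left _ (abs_nonneg x)
      rw [abs_two]
      exact mul_le_mul_of_nonneg_left h2 (by norm_num)
    calc |x| * (|(2:ℝ)| * |inner (𝕜 := ℝ) (u x) (deriv u x)|)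
        ≤ |x| * (2 * (‖u x‖ * ‖deriv u x‖)) := this
      _ = 2 * (g1 x * h1 x) := by simp [hg1def, hh1def]; ring
  -- |∫ f| ≤ 2 √B √A
  have hfieq : (∫ x : ℝ, f x) ≤ 2 * (Real.sqrt B * Real.sqrt A) := by
    have h1' : (∫ x : ℝ, f x) ≤ |∫ x : ℝ, x * deriv f x| := by
      rw [hparts]; exact neg_le_abs _
    have h2' : |∫ x : ℝ, x * deriv f x| ≤ ∫ x : ℝ, |x * deriv f x| := by
      simpa only [Real.norm_eq_abs] using
        norm_integral_le_integral_norm (μ := volume) (fun x => x * deriv f x)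
    have h3' : (∫ x : ℝ, |x * deriv f x|) ≤ ∫ x : ℝ, 2 * (g1 x * h1 x) := by
      refine integral_mono hxf'int.abs ?_ hptwise
      exact ((continuous_const.mul (hg1c.mul hh1c)).integrable_of_hasCompactSupport
        ((hh1supp.mul_left).mul_left))
    have h4' : (∫ x : ℝ, 2 * (g1 x * h1 x)) = 2 * ∫ x : ℝ, g1 x * h1 x :=
      integral_const_mul 2 _
    have h5' : 2 * (∫ x : ℝ, g1 x * h1 x) ≤ 2 * (Real.sqrt B * Real.sqrt A) := by
      linarith [hCS']
    linarith
  -- conclude with AM-GM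
  set I := ∫ x : ℝ, f x with hIdef
  have heq' : μ0 * I = γr * A + (μ2r / 2) * B := heq
  set a := Real.sqrt A
  set b := Real.sqrt B
  have ha2 : a ^ 2 = A := Real.sq_sqrt hA0
  have hb2 : b ^ 2 = B := Real.sq_sqrt hB0
  have ha0 : 0 ≤ a := Real.sqrt_nonneg _
  have hb0 : 0 ≤ b := Real.sqrt_nonneg _
  have hs : Real.sqrt (μ2r * γr / 2)
      = Real.sqrt γr * Real.sqrt (μ2r / 2) := by
    rw [← Real.sqrt_mul hγr.le]
    ring_nf
  have hsγ : Real.sqrt γr ^ 2 = γr := Real.sq_sqrt hγr.le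
  have hsμ : Real.sqrt (μ2r / 2) ^ 2 = μ2r / 2 := Real.sq_sqrt (by linarith)
  have hkey : Real.sqrt (μ2r * γr / 2) * I ≤ μ0 * I := by
    rw [heq', hs]
    nlinarith [sq_nonneg (Real.sqrt γr * a - Real.sqrt (μ2r / 2) * b),
      mul_nonneg (Real.sqrt_nonneg γr) (Real.sqrt_nonneg (μ2r / 2)),
      mul_nonneg (mul_nonneg (Real.sqrt_nonneg γr) (Real.sqrt_nonneg (μ2r / 2))) hI.le,
      mul_nonneg ha0 hb0]
  exact le_of_mul_le_mul_right hkey hI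
end
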